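/- Let a and a' be two address-independent traces of length n with the same number m of distinct data items. Suppose for every data item e ∈ {1,…,m}: the first-access time of e is the same in a and a', e is accessed the same number of times in a and a', and for every j ≥ 2 the reuse distance of the j-th access of e in a equals the reuse distance of the j-th access of e in a'. Then a = a'. In other words, an address-independent trace is uniquely determined by the per-datum reuse-distance sequences together with the per-datum first-access times. -/

import Mathlib

open Finset

/-- The data set of a trace `a` of length `n` (indices 1..n). -/
def dataSet (a : ℕ → ℕ) (n : ℕ) : Finset ℕ := (Finset.Icc 1 n).image a

/-- A trace is address-independent: data items are numbered in order of first appearance. -/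
def isAI (a : ℕ → ℕ) (n : ℕ) : Prop :=
  ∀ t ∈ Finset.Icc 1 n, 1 ≤ a t ∧ a t ≤ 1 + ((Finset.Ico 1 t).image a).card

/-- Indices `s < t` (with `s ≥ 1`) accessing the same datum as `t`. -/
def prevSet (a : ℕ → ℕ) (t : ℕ) : Finset ℕ :=
  (Finset.Ico 1 t).filter (fun s => a s = a t)

/-- Reuse time of access `t`: `t - s*` where `s*` is the previous access to the same
datum, or `⊤` for a first access. -/
def reuseTime (a : ℕ → ℕ) (t : ℕ) : ℕ∞ :=
  if h : (prevSet a t).Nonempty then ((t - (prevSet a t).max' h : ℕ) : ℕ∞) else ⊤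

/-- Reuse distance of access `t`: the number of distinct data accessed in
`a(s*+1), …, a(t)` where `s*` is the previous access to the same datum,
or `⊤` for a first access. -/
def reuseDist (a : ℕ → ℕ) (t : ℕ) : ℕ∞ :=
  if h : (prevSet a t).Nonempty then
    ((((Finset.Icc ((prevSet a t).max' h + 1) t).image a).card : ℕ) : ℕ∞)
  else ⊤

/-- Reuse-time histogram: number of accesses whose reuse time equals `i`. -/
def rtHist (a : ℕ → ℕ) (n i : ℕ) : ℕ :=
  ((Finset.Icc 1 n).filter (fun t => reuseTime a t = (i : ℕ∞))).card

/-- Reuse-distance histogram: number of accesses whose reuse distance equals `v`. -/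
def rdHist (a : ℕ → ℕ) (n v : ℕ) : ℕ :=
  ((Finset.Icc 1 n).filter (fun t => reuseDist a t = (v : ℕ∞))).card

/-- First access time of datum `e`. -/
noncomputable def firstAcc (a : ℕ → ℕ) (n e : ℕ) : ℕ :=
  sInf {t | t ∈ Finset.Icc 1 n ∧ a t = e}

/-- Last access time of datum `e`. -/
noncomputable def lastAcc (a : ℕ → ℕ) (n e : ℕ) : ℕ :=
  sSup {t | t ∈ Finset.Icc 1 n ∧ a t = e}

/-- The sorted list of access times of datum `e` in the trace. -/
def occList (a : ℕ → ℕ) (n e : ℕ) : List ℕ :=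
  ((Finset.Icc 1 n).filter (fun t => a t = e)).sort (· ≤ ·)

/-- Working-set size `ω(t,x)`: distinct data accessed in the window `a(t-x+1), …, a(t)`. -/
def wss (a : ℕ → ℕ) (t x : ℕ) : ℕ := ((Finset.Icc (t - x + 1) t).image a).card

/-- Footprint: the average working-set size over all length-`x` windows. -/
def fp (a : ℕ → ℕ) (n x : ℕ) : ℚ :=
  (∑ t ∈ Finset.Icc x n, (wss a t x : ℚ)) / ((n : ℚ) - (x : ℚ) + 1)

/-- Total working-set size `W(x) = Σ_{t=x}^{n} ω(t,x)`, with `W(0) = 0`. -/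
def totalW (a : ℕ → ℕ) (n x : ℕ) : ℤ :=
  if x = 0 then 0 else ∑ t ∈ Finset.Icc x n, (wss a t x : ℤ)

/-- Steady-state footprint `ss-fp(x) = m - (1/n) Σ_{i=x+1}^{n-1} (i-x)·rt(i)`. -/
def ssfp (a : ℕ → ℕ) (n x : ℕ) : ℚ :=
  ((dataSet a n).card : ℚ)
    - (1 / (n : ℚ)) * ∑ i ∈ Finset.Icc (x + 1) (n - 1), ((i : ℚ) - (x : ℚ)) * (rtHist a n i : ℚ)

section Aux

lemma sorted_getD_filter_lt (L : List ℕ) (hL : L.Pairwise (· < ·)) (t : ℕ) (ht : t ∈ L) :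
    L.getD ((L.filter (· < t)).length) 0 = t := by
  induction L with
  | nil => simp at ht
  | cons x xs ih =>
    have hx : ∀ y ∈ xs, x < y := fun y hy => List.rel_of_pairwise_cons hL hy
    rcases List.mem_cons.1 ht with rfl | hmem
    · have h1 : List.filter (fun y => decide (y < t)) xs = [] := by
        apply List.filter_eq_nil_iff.2
        intro y hy
        simpa using not_lt.2 (le_of_lt (hx y hy))
      simp [List.filter_cons, h1]
    · have hxt : x < t := hx t hmem
      simp only [List.filter_cons, hxt, decide_true, List.length_cons, List.getD_cons_succ]
      exact ih hL.of_cons hmem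

lemma sorted_length_filter_lt_getD (L : List ℕ) (hL : L.Pairwise (· < ·)) (i : ℕ)
    (hi : i < L.length) : (L.filter (· < L.getD i 0)).length = i := by
  induction L generalizing i with
  | nil => simp at hi
  | cons x xs ih =>
    have hx : ∀ y ∈ xs, x < y := fun y hy => List.rel_of_pairwise_cons hL hy
    match i with
    | 0 =>
      have h1 : List.filter (fun y => decide (y < x)) xs = [] := by
        apply List.filter_eq_nil_iff.2
        intro y hy
        simpa using not_lt.2 (le_of_lt (hx y hy))
      simp [List.filter_cons, h1]
    | i + 1 =>
      have hi' : i < xs.length := by simpa using hi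
      have hmem : xs.getD i 0 ∈ xs := by
        rw [List.getD_eq_getElem _ _ hi']; exact List.getElem_mem _
      have hxg : x < xs.getD i 0 := hx _ hmem
      simp only [List.getD_cons_succ, List.filter_cons, hxg, decide_true,
        if_true, List.length_cons]
      rw [ih hL.of_cons i hi']

lemma sorted_length_filter_le_getD (L : List ℕ) (hL : L.Pairwise (· < ·)) (i : ℕ)
    (hi : i < L.length) : (L.filter (· ≤ L.getD i 0)).length = i + 1 := by
  induction L generalizing i with
  | nil => simp at hi
  | cons x xs ih =>
    have hx : ∀ y ∈ xs, x < y := fun y hy => List.rel_of_pairwise_cons hL hy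
    match i with
    | 0 =>
      have h1 : List.filter (fun y => decide (y ≤ x)) xs = [] := by
        apply List.filter_eq_nil_iff.2
        intro y hy
        simpa using not_le.2 (hx y hy)
      simp [List.filter_cons, h1]
    | i + 1 =>
      have hi' : i < xs.length := by simpa using hi
      have hmem : xs.getD i 0 ∈ xs := by
        rw [List.getD_eq_getElem _ _ hi']; exact List.getElem_mem _
      have hxg : x ≤ xs.getD i 0 := (hx _ hmem).le
      simp only [List.getD_cons_succ, List.filter_cons, hxg, decide_true,
        if_true, List.length_cons]
      rw [ih hL.of_cons i hi']

lemma length_filter_sort (s : Finset ℕ) (p : ℕ → Bool) :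
    ((s.sort (· ≤ ·)).filter p).length = (s.filter (fun x => p x)).card := by
  rw [← List.countP_eq_length_filter, (Finset.sort_perm_toList s (· ≤ ·)).countP_eq]
  rw [Finset.card_def, Finset.filter_val, ← Multiset.countP_eq_card_filter,
    ← Finset.coe_toList s, Multiset.coe_countP]
  simp

lemma ai_image (a : ℕ → ℕ) (n : ℕ) (ha : isAI a n) :
    ∀ t, t ≤ n + 1 → ∃ k, (Finset.Ico 1 t).image a = Finset.Icc 1 k := by
  intro t
  induction t with
  | zero => intro _; exact ⟨0, by simp⟩
  | succ t ih =>
    intro ht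
    rcases Nat.eq_zero_or_pos t with rfl | hpos
    · exact ⟨0, by simp⟩
    obtain ⟨k, hk⟩ := ih (le_trans (Nat.le_succ t) ht)
    have htn : t ∈ Finset.Icc 1 n := by
      simp only [Finset.mem_Icc]
      omega
    have hins : Finset.Ico 1 (t + 1) = insert t (Finset.Ico 1 t) :=
      Nat.Ico_succ_right_eq_insert_Ico hpos
    obtain ⟨h1, h2⟩ := ha t htn
    rw [hk, Nat.card_Icc] at h2
    rcases Nat.lt_or_ge k (a t) with hgt | hle
    · refine ⟨k + 1, ?_⟩
      have : a t = k + 1 := by omega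
      rw [hins, Finset.image_insert, hk, this]
      ext x; simp [Nat.lt_succ_iff]; omega
    · refine ⟨k, ?_⟩
      rw [hins, Finset.image_insert, hk]
      rw [Finset.insert_eq_self.2]
      simp only [Finset.mem_Icc]; omega

lemma dataSet_eq (a : ℕ → ℕ) (n m : ℕ) (ha : isAI a n) (hm : (dataSet a n).card = m) :
    dataSet a n = Finset.Icc 1 m := by
  obtain ⟨k, hk⟩ := ai_image a n ha (n + 1) le_rfl
  have h0 : dataSet a n = (Finset.Ico 1 (n + 1)).image a := by
    rw [dataSet, Finset.Ico_add_one_right_eq_Icc]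
  rw [h0, hk] at hm ⊢
  rw [Nat.card_Icc] at hm
  have : k = m := by omega
  rw [this]

lemma new_datum (a : ℕ → ℕ) (n t k : ℕ) (ha : isAI a n) (ht1 : 1 ≤ t) (htn : t ≤ n)
    (hO : ¬ (prevSet a t).Nonempty) (hk : (Finset.Ico 1 t).image a = Finset.Icc 1 k) :
    a t = k + 1 := by
  obtain ⟨h1, h2⟩ := ha t (by simp only [Finset.mem_Icc]; omega)
  rw [hk, Nat.card_Icc] at h2
  have hnot : a t ∉ Finset.Icc 1 k := by
    rw [← hk]; intro hmem
    rcases Finset.mem_image.1 hmem with ⟨s, hs, hsa⟩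
    exact hO ⟨s, Finset.mem_filter.2 ⟨hs, hsa⟩⟩
  simp only [Finset.mem_Icc, not_and, not_le] at hnot
  omega

lemma key_first (n m : ℕ) (a a' : ℕ → ℕ) (ha : isAI a n)
    (hm : (dataSet a n).card = m)
    (hfirst : ∀ e ∈ Finset.Icc 1 m, firstAcc a n e = firstAcc a' n e)
    (t : ℕ) (ht1 : 1 ≤ t) (htn : t ≤ n)
    (hpre : ∀ s ∈ Finset.Ico 1 t, a s = a' s)
    (hO : ¬ (prevSet a t).Nonempty) (hO' : (prevSet a' t).Nonempty) : False := by
  obtain ⟨k, hk⟩ := ai_image a n ha t (by omega)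
  have hat : a t = k + 1 := new_datum a n t k ha ht1 htn hO hk
  have hmemDS : a t ∈ Finset.Icc 1 m := by
    rw [← dataSet_eq a n m ha hm]
    exact Finset.mem_image.2 ⟨t, Finset.mem_Icc.2 ⟨ht1, htn⟩, rfl⟩
  have htS : t ∈ {t' | t' ∈ Finset.Icc 1 n ∧ a t' = a t} :=
    ⟨Finset.mem_Icc.2 ⟨ht1, htn⟩, rfl⟩
  have hfa : firstAcc a n (a t) = t := by
    refine le_antisymm (Nat.sInf_le htS) ?_
    apply le_csInf ⟨t, htS⟩
    intro b hb
    by_contra hbt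
    push_neg at hbt
    have hb1 : 1 ≤ b := (Finset.mem_Icc.1 hb.1).1
    have : a b ∈ (Finset.Ico 1 t).image a :=
      Finset.mem_image.2 ⟨b, Finset.mem_Ico.2 ⟨hb1, hbt⟩, rfl⟩
    rw [hk, hb.2, hat] at this
    simp only [Finset.mem_Icc] at this
    omega
  have hfa' : firstAcc a' n (a t) = t := (hfirst (a t) hmemDS) ▸ hfa
  have hS'ne : {t' | t' ∈ Finset.Icc 1 n ∧ a' t' = a t}.Nonempty := by
    by_contra hemp
    rw [Set.not_nonempty_iff_eq_empty] at hemp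
    rw [firstAcc, hemp, Nat.sInf_empty] at hfa'
    omega
  have hmem' := Nat.sInf_mem hS'ne
  rw [show sInf {t' | t' ∈ Finset.Icc 1 n ∧ a' t' = a t} = firstAcc a' n (a t) from rfl,
    hfa'] at hmem'
  have hat' : a' t = a t := hmem'.2
  obtain ⟨s, hs⟩ := hO'
  rw [prevSet, Finset.mem_filter, Finset.mem_Ico] at hs
  have : a s = a t := by rw [hpre s (Finset.mem_Ico.2 hs.1), hs.2, hat']
  have : a t ∈ (Finset.Ico 1 t).image a :=
    Finset.mem_image.2 ⟨s, Finset.mem_Ico.2 hs.1, this⟩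
  rw [hk, hat] at this
  simp only [Finset.mem_Icc] at this
  omega

lemma key_lt (n : ℕ) (a a' : ℕ → ℕ) (t : ℕ) (ht1 : 1 ≤ t) (htn : t ≤ n)
    (hpre : ∀ s ∈ Finset.Ico 1 t, a s = a' s)
    (hne : a t ≠ a' t)
    (hO : (prevSet a t).Nonempty) (hO' : (prevSet a' t).Nonempty)
    (hlen : (occList a n (a t)).length = (occList a' n (a t)).length)
    (hrde : ∀ j, 2 ≤ j → j ≤ (occList a n (a t)).length →
      reuseDist a ((occList a n (a t)).getD (j - 1) 0)
        = reuseDist a' ((occList a' n (a t)).getD (j - 1) 0)) :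
    (prevSet a t).max' hO < (prevSet a' t).max' hO' := by
  set e : ℕ := a t with he
  set L : List ℕ := occList a n e with hL
  set L' : List ℕ := occList a' n e with hL'
  have hLs : L.Pairwise (· < ·) := (Finset.sortedLT_sort _).pairwise
  have hL's : L'.Pairwise (· < ·) := (Finset.sortedLT_sort _).pairwise
  have hmemL : ∀ x, x ∈ L ↔ (x ∈ Finset.Icc 1 n ∧ a x = e) := by
    intro x
    rw [hL, occList, Finset.mem_sort, Finset.mem_filter]
  have hmemL' : ∀ x, x ∈ L' ↔ (x ∈ Finset.Icc 1 n ∧ a' x = e) := by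
    intro x
    rw [hL', occList, Finset.mem_sort, Finset.mem_filter]
  have htL : t ∈ L := (hmemL t).2 ⟨Finset.mem_Icc.2 ⟨ht1, htn⟩, rfl⟩
  set j : ℕ := (prevSet a t).card + 1 with hj
  -- counting: elements of L below t
  have c1 : (L.filter (· < t)).length = (prevSet a t).card := by
    rw [hL, occList, length_filter_sort]
    congr 1
    rw [Finset.filter_filter]
    ext v
    simp only [Finset.mem_filter, Finset.mem_Icc, prevSet, Finset.mem_Ico,
      decide_eq_true_eq]
    constructor
    · rintro ⟨⟨h1, h2⟩, h3, h4⟩; exact ⟨⟨h1, h4⟩, h3⟩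
    · rintro ⟨⟨h1, h2⟩, h3⟩; exact ⟨⟨h1, by omega⟩, h3, h2⟩
  have hgetT : L.getD (j - 1) 0 = t := by
    have := sorted_getD_filter_lt L hLs t htL
    rw [c1] at this
    simpa [hj] using this
  have hj2 : 2 ≤ j := by
    have := Finset.card_pos.2 hO
    omega
  -- j ≤ L.length
  have hcount_t : ((Finset.Icc 1 t).filter (fun s => a s = e)).card = j := by
    have hsplit : (Finset.Icc 1 t).filter (fun s => a s = e)
        = insert t (prevSet a t) := by
      ext v
      simp only [Finset.mem_filter, Finset.mem_Icc, Finset.mem_insert, prevSet,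
        Finset.mem_Ico]
      constructor
      · rintro ⟨⟨h1, h2⟩, h3⟩
        rcases eq_or_lt_of_le h2 with rfl | hlt
        · exact Or.inl rfl
        · exact Or.inr ⟨⟨h1, hlt⟩, h3⟩
      · rintro (rfl | ⟨⟨h1, h2⟩, h3⟩)
        · exact ⟨⟨ht1, le_refl _⟩, rfl⟩
        · exact ⟨⟨h1, by omega⟩, h3⟩
    rw [hsplit, Finset.card_insert_of_notMem (by simp [prevSet]), hj]
  have hjlen : j ≤ L.length := by
    rw [hL, occList, Finset.length_sort, ← hcount_t]
    apply Finset.card_le_card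
    apply Finset.filter_subset_filter
    exact Finset.Icc_subset_Icc_right htn
  have hj1len' : j - 1 < L'.length := by omega
  set u : ℕ := L'.getD (j - 1) 0 with hu
  have huL' : u ∈ L' := by
    rw [hu, List.getD_eq_getElem _ _ hj1len']
    exact List.getElem_mem _
  obtain ⟨huIcc, hau⟩ := (hmemL' u).1 huL'
  obtain ⟨hu1, hun⟩ := Finset.mem_Icc.1 huIcc
  have hrdtu : reuseDist a t = reuseDist a' u := by
    have := hrde j hj2 hjlen
    rwa [hgetT] at this
  -- count of L' elements ≤ t is j - 1
  have hprevcongr : (Finset.Ico 1 t).filter (fun s => a' s = e)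
      = prevSet a t := by
    rw [prevSet, ← he]
    apply Finset.filter_congr
    intro v hv
    rw [hpre v hv]
  have c2 : (L'.filter (· ≤ t)).length = j - 1 := by
    rw [hL', occList, length_filter_sort]
    have hgoal : ((Finset.Icc 1 n).filter (fun s => a' s = e)).filter
        (fun x => decide (x ≤ t) = true) = prevSet a t := by
      rw [← hprevcongr, Finset.filter_filter]
      ext v
      simp only [Finset.mem_filter, Finset.mem_Icc, Finset.mem_Ico,
        decide_eq_true_eq]
      constructor
      · rintro ⟨⟨h1, h2⟩, h3, h4⟩
        rcases eq_or_lt_of_le h4 with rfl | hlt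
        · exact absurd h3 (by rw [he] at hne ⊢; exact fun hh => hne hh.symm)
        · exact ⟨⟨h1, hlt⟩, h3⟩
      · rintro ⟨⟨h1, h2⟩, h3⟩
        exact ⟨⟨h1, by omega⟩, h3, by omega⟩
    rw [hgoal]
    omega
  have htu : t < u := by
    by_contra hut
    push_neg at hut
    have h1 : (L'.filter (· ≤ u)).length = j :=  by
      have := sorted_length_filter_le_getD L' hL's (j - 1) hj1len'
      rw [← hu] at this
      omega
    have hsub : List.Sublist (L'.filter (· ≤ u)) (L'.filter (· ≤ t)) := by
      apply List.monotone_filter_right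
      intro x hx
      simp only [decide_eq_true_eq] at hx ⊢
      omega
    have := hsub.length_le
    omega
  -- elements of L' below u are exactly those below t
  have c3 : L'.filter (· < t) = L'.filter (· < u) := by
    have h1 : (L'.filter (· < u)).length = j - 1 := by
      have := sorted_length_filter_lt_getD L' hL's (j - 1) hj1len'
      rw [← hu] at this
      exact this
    have h2 : (L'.filter (· < t)).length = j - 1 := by
      rw [hL', occList, length_filter_sort]
      have hgoal : ((Finset.Icc 1 n).filter (fun s => a' s = e)).filter
          (fun x => decide (x < t) = true) = prevSet a t := by
        rw [← hprevcongr, Finset.filter_filter]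
        ext v
        simp only [Finset.mem_filter, Finset.mem_Icc, Finset.mem_Ico,
          decide_eq_true_eq]
        constructor
        · rintro ⟨⟨hh1, hh2⟩, hh3, hh4⟩; exact ⟨⟨hh1, hh4⟩, hh3⟩
        · rintro ⟨⟨hh1, hh2⟩, hh3⟩; exact ⟨⟨hh1, by omega⟩, hh3, hh2⟩
      rw [hgoal]
      omega
    have hsub : List.Sublist (L'.filter (· < t)) (L'.filter (· < u)) := by
      apply List.monotone_filter_right
      intro x hx
      simp only [decide_eq_true_eq] at hx ⊢
      omega
    exact hsub.eq_of_length (by omega)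
  have hps : prevSet a' u = prevSet a t := by
    ext v
    rw [prevSet, prevSet, Finset.mem_filter, Finset.mem_filter, Finset.mem_Ico,
      Finset.mem_Ico, hau]
    constructor
    · rintro ⟨⟨h1, h2⟩, h3⟩
      have hvL' : v ∈ L' := (hmemL' v).2 ⟨Finset.mem_Icc.2 ⟨h1, by omega⟩, h3⟩
      have hvf : v ∈ L'.filter (· < u) := by
        simp only [List.mem_filter, decide_eq_true_eq]
        exact ⟨hvL', h2⟩
      rw [← c3] at hvf
      simp only [List.mem_filter, decide_eq_true_eq] at hvf
      refine ⟨⟨h1, hvf.2⟩, ?_⟩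
      rw [← hpre v (Finset.mem_Ico.2 ⟨h1, hvf.2⟩)] at h3
      rw [h3, he]
    · rintro ⟨⟨h1, h2⟩, h3⟩
      refine ⟨⟨h1, by omega⟩, ?_⟩
      rw [← hpre v (Finset.mem_Ico.2 ⟨h1, h2⟩), h3, he]
  have hOu : (prevSet a' u).Nonempty := by rw [hps]; exact hO
  set s : ℕ := (prevSet a t).max' hO with hsdef
  have hmaxeq : (prevSet a' u).max' hOu = s := by
    rw [hsdef]
    apply le_antisymm
    · apply Finset.max'_le
      intro v hv
      exact Finset.le_max' _ v (hps ▸ hv)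
    · apply Finset.le_max'
      rw [hps]
      exact Finset.max'_mem _ _
  have hsmem := Finset.max'_mem _ hO
  rw [← hsdef] at hsmem
  rw [prevSet, Finset.mem_filter, Finset.mem_Ico] at hsmem
  obtain ⟨⟨hs1, hst⟩, hse⟩ := hsmem
  -- image facts
  set A : Finset ℕ := (Finset.Icc (s + 1) (t - 1)).image a with hA
  have hAnot : e ∉ A := by
    intro hmem
    rcases Finset.mem_image.1 hmem with ⟨v, hv, hva⟩
    rw [Finset.mem_Icc] at hv
    have hvp : v ∈ prevSet a t := by
      rw [prevSet, Finset.mem_filter, Finset.mem_Ico]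
      exact ⟨⟨by omega, by omega⟩, by rw [hva, he]⟩
    have := Finset.le_max' _ v hvp
    rw [← hsdef] at this
    omega
  have hsplit : Finset.Icc (s + 1) t = insert t (Finset.Icc (s + 1) (t - 1)) := by
    ext x
    simp only [Finset.mem_Icc, Finset.mem_insert]
    omega
  have himg : (Finset.Icc (s + 1) t).image a = insert e A := by
    rw [hsplit, Finset.image_insert, he, hA]
  have hrdt : reuseDist a t = ((A.card + 1 : ℕ) : ℕ∞) := by
    rw [reuseDist, dif_pos hO, ← hsdef, himg, Finset.card_insert_of_notMem hAnot]
  have hrdu : reuseDist a' u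
      = ((((Finset.Icc (s + 1) u).image a').card : ℕ) : ℕ∞) := by
    rw [reuseDist, dif_pos hOu, hmaxeq]
  have hcard : ((Finset.Icc (s + 1) u).image a').card = A.card + 1 := by
    have := hrdtu
    rw [hrdt, hrdu] at this
    exact_mod_cast this.symm
  have hsub : insert e A ⊆ (Finset.Icc (s + 1) u).image a' := by
    intro x hx
    rcases Finset.mem_insert.1 hx with rfl | hxA
    · exact Finset.mem_image.2 ⟨u, Finset.mem_Icc.2 ⟨by omega, le_refl _⟩, hau⟩
    · rcases Finset.mem_image.1 hxA with ⟨v, hv, hva⟩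
      rw [Finset.mem_Icc] at hv
      refine Finset.mem_image.2 ⟨v, Finset.mem_Icc.2 ⟨hv.1, by omega⟩, ?_⟩
      rw [← hpre v (Finset.mem_Ico.2 ⟨by omega, by omega⟩)]
      exact hva
  have heqimg : (Finset.Icc (s + 1) u).image a' = insert e A := by
    symm
    apply Finset.eq_of_subset_of_card_le hsub
    rw [hcard, Finset.card_insert_of_notMem hAnot]
  have he'mem : a' t ∈ (Finset.Icc (s + 1) u).image a' :=
    Finset.mem_image.2 ⟨t, Finset.mem_Icc.2 ⟨by omega, by omega⟩, rfl⟩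
  rw [heqimg] at he'mem
  rcases Finset.mem_insert.1 he'mem with heq | hA'
  · exact absurd heq.symm (by rw [he] at hne; exact hne)
  · rcases Finset.mem_image.1 hA' with ⟨v, hv, hva⟩
    rw [Finset.mem_Icc] at hv
    have hvp : v ∈ prevSet a' t := by
      rw [prevSet, Finset.mem_filter, Finset.mem_Ico]
      refine ⟨⟨by omega, by omega⟩, ?_⟩
      rw [← hpre v (Finset.mem_Ico.2 ⟨by omega, by omega⟩)]
      exact hva
    have := Finset.le_max' _ v hvp
    omega

/-- An address-independent trace is uniquely determined by the per-datum reuse-distance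
sequences together with the per-datum first-access times. -/
theorem ai_determined_by_per_datum_reuse_distances (n m : ℕ) (a a' : ℕ → ℕ)
    (ha : isAI a n) (ha' : isAI a' n)
    (hm : (dataSet a n).card = m) (hm' : (dataSet a' n).card = m)
    (hfirst : ∀ e ∈ Finset.Icc 1 m, firstAcc a n e = firstAcc a' n e)
    (hcnt : ∀ e ∈ Finset.Icc 1 m, (occList a n e).length = (occList a' n e).length)
    (hrd : ∀ e ∈ Finset.Icc 1 m, ∀ j, 2 ≤ j → j ≤ (occList a n e).length →
      reuseDist a ((occList a n e).getD (j - 1) 0)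
        = reuseDist a' ((occList a' n e).getD (j - 1) 0)) :
    ∀ t ∈ Finset.Icc 1 n, a t = a' t := by
  intro t
  induction t using Nat.strong_induction_on with
  | _ t ih =>
    intro ht
    obtain ⟨ht1, htn⟩ := Finset.mem_Icc.1 ht
    have hpre : ∀ s ∈ Finset.Ico 1 t, a s = a' s := by
      intro s hs
      obtain ⟨hs1, hs2⟩ := Finset.mem_Ico.1 hs
      exact ih s hs2 (Finset.mem_Icc.2 ⟨hs1, by omega⟩)
    have hpre' : ∀ s ∈ Finset.Ico 1 t, a' s = a s := fun s hs => (hpre s hs).symm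
    by_contra hne
    by_cases hO : (prevSet a t).Nonempty <;> by_cases hO' : (prevSet a' t).Nonempty
    · -- both non-first accesses
      have hatm : a t ∈ Finset.Icc 1 m := by
        rw [← dataSet_eq a n m ha hm]
        exact Finset.mem_image.2 ⟨t, ht, rfl⟩
      have ha'tm : a' t ∈ Finset.Icc 1 m := by
        rw [← dataSet_eq a' n m ha' hm']
        exact Finset.mem_image.2 ⟨t, ht, rfl⟩
      have h1 := key_lt n a a' t ht1 htn hpre hne hO hO'
        (hcnt (a t) hatm) (fun j hj hj2 => hrd (a t) hatm j hj hj2)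
      have h2 := key_lt n a' a t ht1 htn hpre' (Ne.symm hne) hO' hO
        ((hcnt (a' t) ha'tm).symm)
        (fun j hj hj2 => (hrd (a' t) ha'tm j hj
          ((hcnt (a' t) ha'tm) ▸ hj2)).symm)
      omega
    · exact key_first n m a' a ha' hm'
        (fun e he => (hfirst e he).symm) t ht1 htn hpre' hO' hO
    · exact key_first n m a a' ha hm hfirst t ht1 htn hpre hO hO'
    · -- both first accesses
      obtain ⟨k, hk⟩ := ai_image a n ha t (by omega)
      have hk' : (Finset.Ico 1 t).image a' = Finset.Icc 1 k := by
        rw [← hk]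
        apply Finset.image_congr
        intro s hs
        exact (hpre s hs).symm
      have e1 : a t = k + 1 := new_datum a n t k ha ht1 htn hO hk
      have e2 : a' t = k + 1 := new_datum a' n t k ha' ht1 htn hO' hk'
      exact hne (by rw [e1, e2])
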